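/- Let d ≥ 1 and k ≥ 2d+1 be integers, let G be any simple graph, and let γ_s and γ_t be two proper colorings of G using only colors from {1,…,d+1}. Then there is a recoloring sequence through proper k-colorings (with color set {1,…,k}) transforming γ_s into γ_t in which every vertex of G is recolored at most twice. -/

import Mathlib

/-!
Basic framework: proper `k`-colorings (colors in `Fin k`) and recoloring
sequences (lists of steps, each recoloring a single vertex with a new color,
all intermediate colorings being proper).
-/

variable {V : Type*}

/-- `σ` is a proper coloring of `G`. -/
def IsProperColoring {k : ℕ} (G : SimpleGraph V) (σ : V → Fin k) : Prop :=
  ∀ ⦃x y⦄, G.Adj x y → σ x ≠ σ y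

/-- Apply a list of recoloring steps to a coloring. -/
def applySteps {k : ℕ} [DecidableEq V] (α : V → Fin k) (S : List (V × Fin k)) : V → Fin k :=
  S.foldl (fun σ s => Function.update σ s.1 s.2) α

/-- `S` is a valid recoloring sequence from `α` to `β` in `G`: every intermediate
coloring is proper, every step changes the color of the recolored vertex, and the
final coloring is `β`. -/
def IsRecolSeq {k : ℕ} [DecidableEq V] (G : SimpleGraph V) (α β : V → Fin k)
    (S : List (V × Fin k)) : Prop :=
  (∀ i, IsProperColoring G (applySteps α (S.take i))) ∧
  (∀ i (h : i < S.length), applySteps α (S.take i) (S.get ⟨i, h⟩).1 ≠ (S.get ⟨i, h⟩).2) ∧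
  applySteps α S = β

/-- The number of steps of `S` recoloring the vertex `v`. -/
def recolCount {k : ℕ} [DecidableEq V] (S : List (V × Fin k)) (v : V) : ℕ :=
  (S.filter fun s => decide (s.1 = v)).length

/-- A perfect elimination ordering witnessing chordality with clique number at
most `3`: each vertex has at most two neighbors appearing later in the list, and
when it has two such neighbors they are adjacent. -/
def IsPEOList (G : SimpleGraph V) : List V → Prop
  | [] => True
  | v :: vs =>
      (¬ ∃ w₁ ∈ vs, ∃ w₂ ∈ vs, ∃ w₃ ∈ vs,
          G.Adj v w₁ ∧ G.Adj v w₂ ∧ G.Adj v w₃ ∧ w₁ ≠ w₂ ∧ w₁ ≠ w₃ ∧ w₂ ≠ w₃) ∧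
      (∀ w₁ ∈ vs, ∀ w₂ ∈ vs, G.Adj v w₁ → G.Adj v w₂ → w₁ ≠ w₂ → G.Adj w₁ w₂) ∧
      IsPEOList G vs

/-- `G` is a chordal graph with clique number at most `3`, i.e. it admits a perfect
elimination ordering of all its vertices in which every vertex has at most two later
neighbors, adjacent when there are two of them. -/
def IsChordalOmega3 (G : SimpleGraph V) : Prop :=
  ∃ order : List V, order.Nodup ∧ (∀ v : V, v ∈ order) ∧ IsPEOList G order

section Aux
variable {k : ℕ} [DecidableEq V]

lemma applySteps_append (α : V → Fin k) (S T : List (V × Fin k)) :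
    applySteps α (S ++ T) = applySteps (applySteps α S) T := List.foldl_append

lemma recolCount_append (S T : List (V × Fin k)) (v : V) :
    recolCount (S ++ T) v = recolCount S v + recolCount T v := by
  simp [recolCount, List.filter_append]

lemma isRecolSeq_append (G : SimpleGraph V) {α β γ : V → Fin k} {S T : List (V × Fin k)}
    (hS : IsRecolSeq G α β S) (hT : IsRecolSeq G β γ T) :
    IsRecolSeq G α γ (S ++ T) := by
  obtain ⟨h1, h2, h3⟩ := hS
  obtain ⟨g1, g2, g3⟩ := hT
  have key : ∀ i, applySteps α ((S ++ T).take i)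
      = if i ≤ S.length then applySteps α (S.take i) else applySteps β (T.take (i - S.length)) := by
    intro i
    rw [List.take_append, applySteps_append]
    split_ifs with h
    · have : i - S.length = 0 := by omega
      simp [this, applySteps]
    · have : S.take i = S := List.take_of_length_le (by omega)
      rw [this, h3]
  refine ⟨?_, ?_, ?_⟩
  · intro i
    rw [key]
    split_ifs
    · exact h1 i
    · exact g1 _
  · intro i h
    rcases lt_or_ge i S.length with hi | hi
    · rw [key, if_pos hi.le]
      have e1 : ((S ++ T).get ⟨i, h⟩) = S.get ⟨i, hi⟩ := by
        simp only [List.get_eq_getElem]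
        exact List.getElem_append_left hi
      rw [e1]; exact h2 i hi
    · have e : applySteps α ((S ++ T).take i) = applySteps β (T.take (i - S.length)) := by
        rw [List.take_append, applySteps_append,
          List.take_of_length_le hi, h3]
      have hj : i - S.length < T.length := by simp at h; omega
      have e2 : ((S ++ T).get ⟨i, h⟩) = T.get ⟨i - S.length, hj⟩ := by
        simp only [List.get_eq_getElem]
        exact List.getElem_append_right hi
      rw [e2, e]
      exact g2 _ hj
  · have : (S ++ T).length = S.length + T.length := by simp
    rw [applySteps_append, h3, g3]

lemma applySteps_map_update (α f : V → Fin k) (L : List V) :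
    applySteps α (L.map fun v => (v, f v)) = fun w => if w ∈ L then f w else α w := by
  induction L generalizing α with
  | nil => funext w; simp [applySteps]
  | cons v L ih =>
    rw [List.map_cons]
    show applySteps (Function.update α v (f v)) (L.map fun v => (v, f v)) = _
    rw [ih]
    funext w
    by_cases hw : w ∈ L
    · simp [hw]
    · by_cases hv : w = v
      · subst hv; simp [hw, Function.update_self]
      · simp [hw, hv, Function.update_of_ne hv]

lemma isRecolSeq_phase (G : SimpleGraph V) (α f : V → Fin k) (L : List V) (hnd : L.Nodup)
    (hne : ∀ v ∈ L, f v ≠ α v)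
    (hprop : ∀ P : List V, (∀ v ∈ P, v ∈ L) →
      IsProperColoring G (fun w => if w ∈ P then f w else α w)) :
    IsRecolSeq G α (fun w => if w ∈ L then f w else α w) (L.map fun v => (v, f v)) := by
  refine ⟨?_, ?_, ?_⟩
  · intro i
    rw [← List.map_take, applySteps_map_update]
    exact hprop _ (fun v hv => List.mem_of_mem_take hv)
  · intro i h
    have hlen : i < L.length := by simpa using h
    rw [← List.map_take, applySteps_map_update]
    simp only [List.get_eq_getElem, List.getElem_map]
    have hnm : L[i] ∉ L.take i := by
      intro hmem
      obtain ⟨j, hj, hje⟩ := List.getElem_of_mem hmem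
      have hjl : j < L.length := by simp at hj; omega
      rw [List.getElem_take] at hje
      have := hnd.getElem_inj_iff.mp hje
      simp at hj; omega
    rw [if_neg hnm]
    exact fun e => hne L[i] (List.getElem_mem hlen) e.symm
  · rw [applySteps_map_update]

lemma recolCount_map (f : V → Fin k) (L : List V) (v : V) :
    recolCount (L.map fun v => (v, f v)) v = L.count v := by
  simp only [recolCount, List.filter_map, List.length_map, List.count,
    List.countP_eq_length_filter]
  congr 1

end Aux

/-- Let `d ≥ 1` and `k ≥ 2d+1`, let `G` be a simple graph, and let
`γs, γt` be two proper colorings of `G` using only the first `d+1` colors among the `k`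
colors. Then there is a recoloring sequence through proper `k`-colorings from `γs` to
`γt` recoloring every vertex at most twice. -/
theorem statement_2 (d k : ℕ) (hd : 1 ≤ d) (hk : 2 * d + 1 ≤ k)
    {V : Type*} [Fintype V] [DecidableEq V] (G : SimpleGraph V)
    (γs γt : V → Fin k)
    (hγs : IsProperColoring G γs) (hγt : IsProperColoring G γt)
    (hsd : ∀ v : V, (γs v : ℕ) < d + 1) (htd : ∀ v : V, (γt v : ℕ) < d + 1) :
    ∃ S : List (V × Fin k), IsRecolSeq G γs γt S ∧ ∀ v : V, recolCount S v ≤ 2 := by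
  haveI : NeZero k := ⟨by omega⟩
  have hz : ∀ c : Fin k, c = 0 ↔ (c : ℕ) = 0 := by
    intro c; rw [Fin.ext_iff, Fin.val_zero]
  set f1 : V → Fin k := fun v => ⟨(γt v : ℕ) + d, by have := htd v; omega⟩ with hf1
  have val_f1 : ∀ v, (f1 v : ℕ) = (γt v : ℕ) + d := fun v => rfl
  set L1 : List V := (Finset.univ.filter fun v => γt v ≠ 0).toList with hL1
  set L2 : List V := (Finset.univ.filter fun v => γt v = 0 ∧ γs v ≠ 0).toList with hL2
  have hm1 : ∀ v, v ∈ L1 ↔ γt v ≠ 0 := by intro v; simp [hL1]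
  have hm2 : ∀ v, v ∈ L2 ↔ (γt v = 0 ∧ γs v ≠ 0) := by intro v; simp [hL2]
  have hnd1 : L1.Nodup := Finset.nodup_toList _
  have hnd2 : L2.Nodup := Finset.nodup_toList _
  -- phase 1 properness
  have prop1 : ∀ P : List V, (∀ v ∈ P, v ∈ L1) →
      IsProperColoring G (fun w => if w ∈ P then f1 w else γs w) := by
    intro P hP x y hxy heq
    dsimp only at heq
    by_cases hx : x ∈ P <;> by_cases hy : y ∈ P
    · rw [if_pos hx, if_pos hy] at heq
      have hv := congrArg Fin.val heq
      simp only [val_f1, Fin.val_zero] at hv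
      exact hγt hxy (Fin.ext (by omega))
    · rw [if_pos hx, if_neg hy] at heq
      have hv := congrArg Fin.val heq
      simp only [val_f1, Fin.val_zero] at hv
      have h1 : γt x ≠ 0 := (hm1 x).mp (hP x hx)
      have h2 : (γt x : ℕ) ≠ 0 := fun e => h1 ((hz _).mpr e)
      have := hsd y; omega
    · rw [if_neg hx, if_pos hy] at heq
      have hv := congrArg Fin.val heq
      simp only [val_f1, Fin.val_zero] at hv
      have h1 : γt y ≠ 0 := (hm1 y).mp (hP y hy)
      have h2 : (γt y : ℕ) ≠ 0 := fun e => h1 ((hz _).mpr e)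
      have := hsd x; omega
    · rw [if_neg hx, if_neg hy] at heq
      exact hγs hxy heq
  have hβ1prop : IsProperColoring G (fun w => if w ∈ L1 then f1 w else γs w) :=
    prop1 L1 (fun _ h => h)
  have h1 : IsRecolSeq G γs (fun w => if w ∈ L1 then f1 w else γs w)
      (L1.map fun v => (v, f1 v)) := by
    apply isRecolSeq_phase G γs f1 L1 hnd1 ?_ prop1
    intro v hv e
    have hv1 : γt v ≠ 0 := (hm1 v).mp hv
    have hv2 : (γt v : ℕ) ≠ 0 := fun e2 => hv1 ((hz _).mpr e2)
    have hval := congrArg Fin.val e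
    simp only [val_f1] at hval
    have := hsd v; omega
  -- phase 2
  have prop2 : ∀ P : List V, (∀ v ∈ P, v ∈ L2) →
      IsProperColoring G
        (fun w => if w ∈ P then (0 : Fin k) else if w ∈ L1 then f1 w else γs w) := by
    intro P hP x y hxy heq
    dsimp only at heq
    by_cases hx : x ∈ P <;> by_cases hy : y ∈ P
    · have tx : γt x = 0 := ((hm2 x).mp (hP x hx)).1
      have ty : γt y = 0 := ((hm2 y).mp (hP y hy)).1
      exact hγt hxy (tx.trans ty.symm)
    · rw [if_pos hx, if_neg hy] at heq
      have tx : γt x = 0 := ((hm2 x).mp (hP x hx)).1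
      by_cases hy1 : y ∈ L1
      · rw [if_pos hy1] at heq
        have hv := congrArg Fin.val heq
        simp only [val_f1, Fin.val_zero] at hv
        omega
      · have ty : γt y = 0 := by
          by_contra h; exact hy1 ((hm1 y).mpr h)
        exact hγt hxy (tx.trans ty.symm)
    · rw [if_neg hx, if_pos hy] at heq
      have ty : γt y = 0 := ((hm2 y).mp (hP y hy)).1
      by_cases hx1 : x ∈ L1
      · rw [if_pos hx1] at heq
        have hv := congrArg Fin.val heq
        simp only [val_f1, Fin.val_zero] at hv
        omega
      · have tx : γt x = 0 := by
          by_contra h; exact hx1 ((hm1 x).mpr h)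
        exact hγt hxy (tx.trans ty.symm)
    · rw [if_neg hx, if_neg hy] at heq
      exact hβ1prop hxy heq
  have h2 : IsRecolSeq G (fun w => if w ∈ L1 then f1 w else γs w)
      (fun w => if w ∈ L2 then (0 : Fin k) else if w ∈ L1 then f1 w else γs w)
      (L2.map fun v => (v, (0 : Fin k))) := by
    apply isRecolSeq_phase G _ _ L2 hnd2 ?_ prop2
    intro v hv e
    obtain ⟨tv, sv⟩ := (hm2 v).mp hv
    have hv1 : v ∉ L1 := fun h => ((hm1 v).mp h) tv
    rw [if_neg hv1] at e
    exact sv e.symm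
  -- closed form for β2
  have hβ2 : ∀ w, (if w ∈ L2 then (0 : Fin k) else if w ∈ L1 then f1 w else γs w)
      = if γt w = 0 then (0 : Fin k) else f1 w := by
    intro w
    by_cases tw : γt w = 0
    · rw [if_pos tw]
      by_cases sw : γs w = 0
      · rw [if_neg (fun h => ((hm2 w).mp h).2 sw),
          if_neg (fun h => ((hm1 w).mp h) tw)]
        exact sw
      · rw [if_pos ((hm2 w).mpr ⟨tw, sw⟩)]
    · rw [if_neg tw, if_neg (fun h => tw ((hm2 w).mp h).1),
        if_pos ((hm1 w).mpr tw)]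
  -- phase 3
  have prop3 : ∀ P : List V, (∀ v ∈ P, v ∈ L1) →
      IsProperColoring G (fun w => if w ∈ P then γt w
        else if w ∈ L2 then (0 : Fin k) else if w ∈ L1 then f1 w else γs w) := by
    intro P hP x y hxy heq
    dsimp only at heq
    simp only [hβ2] at heq
    have hc : ∀ z : V, z ∈ P → γt z ≠ 0 := fun z hzp => (hm1 z).mp (hP z hzp)
    by_cases hx : x ∈ P <;> by_cases hy : y ∈ P
    · rw [if_pos hx, if_pos hy] at heq
      exact hγt hxy heq
    · rw [if_pos hx, if_neg hy] at heq
      by_cases ty : γt y = 0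
      · rw [if_pos ty] at heq
        exact hc x hx heq
      · rw [if_neg ty] at heq
        have hv := congrArg Fin.val heq
        simp only [val_f1, Fin.val_zero] at hv
        have hty : (γt y : ℕ) ≠ 0 := fun e => ty ((hz _).mpr e)
        have := htd x; omega
    · rw [if_neg hx, if_pos hy] at heq
      by_cases tx : γt x = 0
      · rw [if_pos tx] at heq
        exact hc y hy heq.symm
      · rw [if_neg tx] at heq
        have hv := congrArg Fin.val heq
        simp only [val_f1, Fin.val_zero] at hv
        have htx : (γt x : ℕ) ≠ 0 := fun e => tx ((hz _).mpr e)
        have := htd y; omega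
    · rw [if_neg hx, if_neg hy] at heq
      by_cases tx : γt x = 0 <;> by_cases ty : γt y = 0
      · exact hγt hxy (tx.trans ty.symm)
      · rw [if_pos tx, if_neg ty] at heq
        have hv := congrArg Fin.val heq
        simp only [val_f1, Fin.val_zero] at hv
        omega
      · rw [if_neg tx, if_pos ty] at heq
        have hv := congrArg Fin.val heq
        simp only [val_f1, Fin.val_zero] at hv
        omega
      · rw [if_neg tx, if_neg ty] at heq
        have hv := congrArg Fin.val heq
        simp only [val_f1, Fin.val_zero] at hv
        exact hγt hxy (Fin.ext (by omega))
  have h3 : IsRecolSeq G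
      (fun w => if w ∈ L2 then (0 : Fin k) else if w ∈ L1 then f1 w else γs w)
      (fun w => if w ∈ L1 then γt w
        else if w ∈ L2 then (0 : Fin k) else if w ∈ L1 then f1 w else γs w)
      (L1.map fun v => (v, γt v)) := by
    apply isRecolSeq_phase G _ γt L1 hnd1 ?_ prop3
    intro v hv e
    have tv : γt v ≠ 0 := (hm1 v).mp hv
    rw [hβ2, if_neg tv] at e
    have hval := congrArg Fin.val e
    rw [val_f1] at hval
    omega
  -- final coloring is γt
  have hfin : (fun w => if w ∈ L1 then γt w
      else if w ∈ L2 then (0 : Fin k) else if w ∈ L1 then f1 w else γs w) = γt := by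
    funext w
    by_cases hw : w ∈ L1
    · rw [if_pos hw]
    · rw [if_neg hw, hβ2]
      have tw : γt w = 0 := by
        by_contra h; exact hw ((hm1 w).mpr h)
      rw [if_pos tw, tw]
  rw [hfin] at h3
  refine ⟨(L1.map fun v => (v, f1 v)) ++ ((L2.map fun v => (v, (0 : Fin k))) ++
      (L1.map fun v => (v, γt v))), isRecolSeq_append G h1 (isRecolSeq_append G h2 h3), ?_⟩
  intro v
  rw [recolCount_append, recolCount_append, recolCount_map, recolCount_map, recolCount_map]
  have c1 : L1.count v ≤ 1 := List.nodup_iff_count_le_one.mp hnd1 v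
  have c2 : L2.count v ≤ 1 := List.nodup_iff_count_le_one.mp hnd2 v
  by_cases hv : v ∈ L1
  · have : L2.count v = 0 := List.count_eq_zero.mpr
      (fun h => ((hm2 v).mp h).1 |> (hm1 v).mp hv)
    omega
  · have : L1.count v = 0 := List.count_eq_zero.mpr hv
    omega
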